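/- Let k be a field of characteristic p > 2, W a finite-dimensional k-vector space, and A = k[W*]/m^{[p]} the quotient of the polynomial algebra on W by the ideal generated by p-th powers of elements of the augmentation ideal m. Suppose A carries a Poisson bracket for which the Hamiltonian vector fields generate all k-linear derivations of A as an A-module. Then the only Poisson ideals of A are 0 and A itself. -/

import Mathlib

set_option synthInstance.maxHeartbeats 1000000
set_option maxHeartbeats 1000000

/-- The finite-dimensional local Artin algebra `A = k[W*]/m^[p]`:
the polynomial algebra on an `n`-dimensional vector space modulo the ideal
generated by `p`-th powers of elements of the augmentation ideal `m`. -/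
abbrev truncA (k : Type*) [Field k] (p n : ℕ) : Type _ :=
  MvPolynomial (Fin n) k ⧸
    Ideal.span ((· ^ p) ''
      {f : MvPolynomial (Fin n) k | MvPolynomial.constantCoeff f = 0})

namespace Statement8Aux

open MvPolynomial

/-- The ideal we quotient by. -/
noncomputable abbrev JJ (k : Type*) [Field k] (p n : ℕ) : Ideal (MvPolynomial (Fin n) k) :=
  Ideal.span ((· ^ p) ''
    {f : MvPolynomial (Fin n) k | MvPolynomial.constantCoeff f = 0})

variable {k : Type*} [Field k] {p n : ℕ}

lemma coeff_pderiv (i : Fin n) (m : Fin n →₀ ℕ) (f : MvPolynomial (Fin n) k) :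
    coeff m (pderiv i f)
      = coeff (m + Finsupp.single i 1) f * ((m i : k) + 1) := by
  induction f using MvPolynomial.induction_on' with
  | monomial s a =>
    rw [pderiv_monomial, coeff_monomial, coeff_monomial]
    by_cases h : s = m + Finsupp.single i 1
    · subst h
      rw [if_pos (add_tsub_cancel_right m (Finsupp.single i 1)), if_pos rfl,
        Finsupp.add_apply, Finsupp.single_eq_same]
      push_cast
      ring
    · rw [if_neg h]
      by_cases h2 : s - Finsupp.single i 1 = m
      · have hsi : s i = 0 := by
          by_contra hsi
          apply h
          have hle : Finsupp.single i 1 ≤ s :=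
            Finsupp.single_le_iff.mpr (Nat.one_le_iff_ne_zero.mpr hsi)
          rw [← h2, tsub_add_cancel_of_le hle]
        rw [if_pos h2, hsi]
        simp
      · rw [if_neg h2, zero_mul]
  | add f g hf hg =>
    simp only [map_add, coeff_add, hf, hg]
    ring

lemma monomial_mem_JJ {α : Fin n →₀ ℕ} (c : k) {i : Fin n} (h : p ≤ α i) :
    monomial α c ∈ JJ k p n := by
  have hle : Finsupp.single i p ≤ α := Finsupp.single_le_iff.mpr h
  have hx : (X i : MvPolynomial (Fin n) k) ^ p ∈ JJ k p n :=
    Ideal.subset_span ⟨X i, by simp, rfl⟩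
  have heq : (monomial α c : MvPolynomial (Fin n) k)
      = monomial (α - Finsupp.single i p) c * X i ^ p := by
    rw [X_pow_eq_monomial, monomial_mul, tsub_add_cancel_of_le hle, mul_one]
  rw [heq]
  exact Ideal.mul_mem_left _ _ hx

lemma constantCoeff_of_mem (hp : p ≠ 0) {f : MvPolynomial (Fin n) k}
    (hf : f ∈ JJ k p n) : constantCoeff f = 0 := by
  have hle : JJ k p n ≤ RingHom.ker (constantCoeff (σ := Fin n) (R := k)) := by
    rw [Ideal.span_le]
    rintro _ ⟨g, hg, rfl⟩
    simp only [RingHom.mem_ker, SetLike.mem_coe]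
    rw [map_pow]
    rw [Set.mem_setOf_eq] at hg
    rw [hg, zero_pow hp]
  exact hle hf

lemma pderiv_mem [CharP k p] (i : Fin n) :
    ∀ f ∈ JJ k p n, pderiv i f ∈ JJ k p n := by
  intro f hf
  induction hf using Submodule.span_induction with
  | mem x hx =>
    obtain ⟨g, hg, rfl⟩ := hx
    rw [pderiv_pow]
    have : ((p : MvPolynomial (Fin n) k)) = 0 := CharP.cast_eq_zero _ p
    rw [this, zero_mul, zero_mul]
    exact Ideal.zero_mem _
  | zero => rw [map_zero]; exact Ideal.zero_mem _
  | add x y hx hy ihx ihy => rw [map_add]; exact Ideal.add_mem _ ihx ihy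
  | smul a x hx ihx =>
    rw [smul_eq_mul, pderiv_mul]
    exact Ideal.add_mem _ (Ideal.mul_mem_left _ _ hx) (Ideal.mul_mem_left _ _ ihx)

lemma key [CharP k p] (i : Fin n) (f : MvPolynomial (Fin n) k) :
    Ideal.Quotient.mk (JJ k p n)
      (pderiv i (Function.surjInv
        (Ideal.Quotient.mk_surjective (I := JJ k p n))
        (Ideal.Quotient.mk (JJ k p n) f)))
      = Ideal.Quotient.mk (JJ k p n) (pderiv i f) := by
  set g := Function.surjInv (Ideal.Quotient.mk_surjective (I := JJ k p n))
    (Ideal.Quotient.mk (JJ k p n) f) with hg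
  have h1 : Ideal.Quotient.mk (JJ k p n) g = Ideal.Quotient.mk (JJ k p n) f :=
    Function.surjInv_eq _ _
  have h2 : g - f ∈ JJ k p n := Ideal.Quotient.eq.mp h1
  have h3 : pderiv i (g - f) ∈ JJ k p n := pderiv_mem i _ h2
  rw [map_sub] at h3
  exact Ideal.Quotient.eq.mpr h3

/-- The partial derivative `∂/∂x_i` descends to a `k`-linear derivation of `A`. -/
noncomputable def Dder (k : Type*) [Field k] (p n : ℕ) [CharP k p] (i : Fin n) :
    Derivation k (truncA k p n) (truncA k p n) where
  toFun x := Ideal.Quotient.mk (JJ k p n)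
    (pderiv i (Function.surjInv (Ideal.Quotient.mk_surjective (I := JJ k p n)) x))
  map_add' a b := by
    obtain ⟨f, rfl⟩ := Ideal.Quotient.mk_surjective (I := JJ k p n) a
    obtain ⟨g, rfl⟩ := Ideal.Quotient.mk_surjective (I := JJ k p n) b
    rw [← map_add, key, key, key, map_add, map_add]
  map_smul' c a := by
    obtain ⟨f, rfl⟩ := Ideal.Quotient.mk_surjective (I := JJ k p n) a
    have h1 : c • (Ideal.Quotient.mk (JJ k p n) f)
        = Ideal.Quotient.mk (JJ k p n) (c • f) := by
      rw [← Ideal.Quotient.mkₐ_eq_mk k, map_smul]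
    have h2 : Ideal.Quotient.mk (JJ k p n) (c • pderiv i f)
        = c • Ideal.Quotient.mk (JJ k p n) (pderiv i f) := by
      rw [← Ideal.Quotient.mkₐ_eq_mk k, map_smul]
    rw [RingHom.id_apply, h1, key, key, Derivation.map_smul, h2]
  map_one_eq_zero' := by
    have h1 : (1 : truncA k p n) = Ideal.Quotient.mk (JJ k p n) 1 := rfl
    dsimp only [LinearMap.coe_mk, AddHom.coe_mk]
    rw [h1, key]
    simp
  leibniz' a b := by
    obtain ⟨f, rfl⟩ := Ideal.Quotient.mk_surjective (I := JJ k p n) a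
    obtain ⟨g, rfl⟩ := Ideal.Quotient.mk_surjective (I := JJ k p n) b
    dsimp only [LinearMap.coe_mk, AddHom.coe_mk]
    rw [← map_mul, key, key, key, pderiv_mul, map_add, map_mul, map_mul]
    rw [smul_eq_mul, smul_eq_mul]
    ring

lemma Dder_mk [CharP k p] (i : Fin n) (f : MvPolynomial (Fin n) k) :
    Dder k p n i (Ideal.Quotient.mk (JJ k p n) f)
      = Ideal.Quotient.mk (JJ k p n) (pderiv i f) :=
  key i f

lemma isUnit_of_constantCoeff (hp : p ≠ 0) (f : MvPolynomial (Fin n) k)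
    (hc : constantCoeff f ≠ 0) :
    IsUnit (Ideal.Quotient.mk (JJ k p n) f) := by
  set c := constantCoeff f with hcdef
  have hnil : IsNilpotent (Ideal.Quotient.mk (JJ k p n) (f - C c)) := by
    refine ⟨p, ?_⟩
    rw [← map_pow, Ideal.Quotient.eq_zero_iff_mem]
    exact Ideal.subset_span ⟨f - C c, by simp [hcdef], rfl⟩
  have hu : IsUnit (Ideal.Quotient.mk (JJ k p n) (C c)) :=
    (isUnit_iff_ne_zero.mpr hc).map ((Ideal.Quotient.mk (JJ k p n)).comp
      (C : k →+* MvPolynomial (Fin n) k))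
  have := hnil.isUnit_add_left_of_commute hu (Commute.all _ _)
  rwa [← map_add, add_sub_cancel] at this

lemma exists_reduced (x : truncA k p n) :
    ∃ f : MvPolynomial (Fin n) k, Ideal.Quotient.mk (JJ k p n) f = x ∧
      ∀ α ∈ f.support, ∀ i, α i < p := by
  classical
  obtain ⟨g, rfl⟩ := Ideal.Quotient.mk_surjective (I := JJ k p n) x
  refine ⟨∑ α ∈ g.support.filter (fun α => ∀ i, α i < p), monomial α (coeff α g), ?_, ?_⟩
  · rw [Ideal.Quotient.eq]
    have hsum := Finset.sum_filter_add_sum_filter_not g.support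
      (fun α => ∀ i, α i < p) (fun α => monomial α (coeff α g))
    have hbad : (∑ α ∈ g.support.filter (fun α => ¬ ∀ i, α i < p),
        monomial α (coeff α g)) ∈ JJ k p n := by
      refine Ideal.sum_mem _ (fun α hα => ?_)
      rw [Finset.mem_filter] at hα
      push_neg at hα
      obtain ⟨i, hi⟩ := hα.2
      exact monomial_mem_JJ _ hi
    have hg2 : g = (∑ α ∈ g.support.filter (fun α => ∀ i, α i < p),
          monomial α (coeff α g))
        + ∑ α ∈ g.support.filter (fun α => ¬ ∀ i, α i < p),
            monomial α (coeff α g) := by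
      conv_lhs => rw [g.as_sum]
      exact hsum.symm
    have hrw : (∑ α ∈ g.support.filter (fun α => ∀ i, α i < p),
          monomial α (coeff α g)) - g
        = -(∑ α ∈ g.support.filter (fun α => ¬ ∀ i, α i < p),
            monomial α (coeff α g)) := by
      linear_combination -hg2
    rw [hrw]
    exact neg_mem hbad
  · intro α hα i
    by_cases hin : α ∈ g.support.filter (fun α => ∀ i, α i < p)
    · exact (Finset.mem_filter.mp hin).2 i
    · exfalso
      apply mem_support_iff.mp hα
      rw [coeff_sum]
      refine Finset.sum_eq_zero (fun β hβ => ?_)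
      rw [coeff_monomial, if_neg]
      rintro rfl
      exact hin hβ

lemma reach_top [CharP k p] (hp : p.Prime) (I : Ideal (truncA k p n))
    (hst : ∀ f : MvPolynomial (Fin n) k,
      Ideal.Quotient.mk (JJ k p n) f ∈ I → ∀ i : Fin n,
        Ideal.Quotient.mk (JJ k p n) (pderiv i f) ∈ I) :
    ∀ (d : ℕ) (f : MvPolynomial (Fin n) k), f.totalDegree ≤ d → f ≠ 0 →
      (∀ α ∈ f.support, ∀ i, α i < p) →
      Ideal.Quotient.mk (JJ k p n) f ∈ I → I = ⊤ := by
  intro d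
  induction d with
  | zero =>
    intro f hdeg hne hred hmem
    by_cases hc : constantCoeff f = 0
    · exfalso
      obtain ⟨α, hα⟩ := support_nonempty.mpr hne
      have hα0 : α ≠ 0 := by
        rintro rfl
        exact mem_support_iff.mp hα hc
      obtain ⟨i, hi⟩ := Finsupp.support_nonempty_iff.mpr hα0
      have hi' : α i ≠ 0 := Finsupp.mem_support_iff.mp hi
      have hle := le_totalDegree hα
      have hzero : (α.sum fun _ e => e) = 0 := by omega
      have : α i = 0 := by
        have := Finset.sum_eq_zero_iff.mp hzero i hi
        exact this
      exact hi' this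
    · exact Ideal.eq_top_of_isUnit_mem _ hmem (isUnit_of_constantCoeff hp.ne_zero f hc)
  | succ d ih =>
    intro f hdeg hne hred hmem
    by_cases hc : constantCoeff f = 0
    · obtain ⟨α, hα⟩ := support_nonempty.mpr hne
      have hα0 : α ≠ 0 := by
        rintro rfl
        exact mem_support_iff.mp hα hc
      obtain ⟨i, hi⟩ := Finsupp.support_nonempty_iff.mpr hα0
      have hαi : α i ≠ 0 := Finsupp.mem_support_iff.mp hi
      set g := pderiv i f with hgdef
      set β := α - Finsupp.single i 1 with hβdef
      have hleβ : Finsupp.single i 1 ≤ α :=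
        Finsupp.single_le_iff.mpr (Nat.one_le_iff_ne_zero.mpr hαi)
      have hβα : β + Finsupp.single i 1 = α := tsub_add_cancel_of_le hleβ
      have hβi : β i + 1 = α i := by
        have : β i = α i - 1 := by
          rw [hβdef, Finsupp.tsub_apply, Finsupp.single_eq_same]
        omega
      have hcoeff : coeff β g = coeff α f * ((β i : k) + 1) := by
        rw [hgdef, coeff_pderiv, hβα]
      have hne2 : ((β i : k) + 1) ≠ 0 := by
        have h1 : ((β i : k) + 1) = ((α i : ℕ) : k) := by
          rw [← hβi]; push_cast; ring
        rw [h1]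
        rw [Ne, CharP.cast_eq_zero_iff k p]
        exact Nat.not_dvd_of_pos_of_lt (Nat.pos_of_ne_zero hαi) (hred α hα i)
      have hgcoeff : coeff β g ≠ 0 :=
        hcoeff ▸ mul_ne_zero (mem_support_iff.mp hα) hne2
      have hg0 : g ≠ 0 := fun h => hgcoeff (by rw [h, coeff_zero])
      have hgsupp : ∀ γ ∈ g.support, γ + Finsupp.single i 1 ∈ f.support := by
        intro γ hγ
        have hne3 : coeff γ g ≠ 0 := mem_support_iff.mp hγ
        rw [hgdef, coeff_pderiv] at hne3
        exact mem_support_iff.mpr (left_ne_zero_of_mul hne3)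
      have hgred : ∀ γ ∈ g.support, ∀ j, γ j < p := by
        intro γ hγ j
        have := hred _ (hgsupp γ hγ) j
        rw [Finsupp.add_apply] at this
        omega
      have hgdeg : g.totalDegree ≤ d := by
        show g.support.sup (fun s => s.sum fun _ e => e) ≤ d
        refine Finset.sup_le (fun γ hγ => ?_)
        have h1 := le_totalDegree (hgsupp γ hγ)
        have h2 : ((γ + Finsupp.single i 1).sum fun _ e => e)
            = (γ.sum fun _ e => e) + 1 := by
          rw [Finsupp.sum_add_index' (fun _ => rfl) (fun _ _ _ => rfl),
            Finsupp.sum_single_index rfl]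
        omega
      exact ih g hgdeg hg0 hgred (hst f hmem i)
    · exact Ideal.eq_top_of_isUnit_mem _ hmem (isUnit_of_constantCoeff hp.ne_zero f hc)

end Statement8Aux

/-- Let `k` be a field of characteristic `p > 2`, `W` an `n`-dimensional
`k`-vector space, and `A = k[W*]/m^[p]`.  Suppose `A` carries a Poisson
bracket whose Hamiltonian derivations `H f = {f, -}` generate all `k`-linear
derivations of `A` as an `A`-module.  Then the only Poisson ideals of `A` are
`0` and `A`. -/
theorem statement8 {k : Type*} [Field k]
    {p : ℕ} (hp : p.Prime) (hp2 : 2 < p) [CharP k p] (n : ℕ)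
    (bra : truncA k p n → truncA k p n → truncA k p n)
    (H : truncA k p n → Derivation k (truncA k p n) (truncA k p n))
    (hH : ∀ f g : truncA k p n, H f g = bra f g)
    (hgen : Submodule.span (truncA k p n) (Set.range H) = ⊤) :
    ∀ I : Ideal (truncA k p n),
      (∀ a ∈ I, ∀ f : truncA k p n, bra f a ∈ I) → I = ⊥ ∨ I = ⊤ := by
  open Statement8Aux in
  intro I hI
  by_cases hbot : I = ⊥
  · exact Or.inl hbot
  refine Or.inr ?_
  have hder : ∀ (D : Derivation k (truncA k p n) (truncA k p n)),
      ∀ x ∈ I, D x ∈ I := by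
    intro D
    have hDmem : D ∈ Submodule.span (truncA k p n) (Set.range H) := by
      rw [hgen]; exact Submodule.mem_top
    induction hDmem using Submodule.span_induction with
    | mem D hD =>
      obtain ⟨f, rfl⟩ := hD
      intro x hx
      rw [hH]
      exact hI x hx f
    | zero => intro x hx; simp
    | add D1 D2 h1 h2 ih1 ih2 =>
      intro x hx
      rw [Derivation.add_apply]
      exact I.add_mem (ih1 x hx) (ih2 x hx)
    | smul a D hD ihD =>
      intro x hx
      rw [Derivation.smul_apply]
      exact I.smul_mem a (ihD x hx)
  have hst : ∀ f : MvPolynomial (Fin n) k,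
      Ideal.Quotient.mk (JJ k p n) f ∈ I → ∀ i : Fin n,
        Ideal.Quotient.mk (JJ k p n) (MvPolynomial.pderiv i f) ∈ I := by
    intro f hf i
    have := hder (Dder k p n i) _ hf
    rwa [Dder_mk] at this
  obtain ⟨x, hxI, hx0⟩ := Submodule.exists_mem_ne_zero_of_ne_bot hbot
  obtain ⟨f, hfx, hred⟩ := exists_reduced (k := k) (p := p) (n := n) x
  have hf0 : f ≠ 0 := by
    rintro rfl
    rw [map_zero] at hfx
    exact hx0 hfx.symm
  subst hfx
  exact reach_top hp I hst f.totalDegree f le_rfl hf0 hred hxI
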